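/- For n ≥ 3, |SPP(n)| ≤ (n² - 3n + 4)²/4 − (n−2)²(n−1)/2, where SPP(n) = {(|A+A|,|AA|) : A ⊆ ℕ₊, |A| = n}. -/

import Mathlib

set_option maxHeartbeats 1000000
open Finset Pointwise

/-- Upper bound: |A*A| ≤ n(n+1)/2. -/
lemma card_mul_self_le' {α : Type*} [CommMonoid α] [DecidableEq α] :
    ∀ (n : ℕ) (A : Finset α), A.card = n → (A * A).card ≤ n * (n + 1) / 2 := by
  intro n
  induction n with
  | zero => intro A hA; simp [Finset.card_eq_zero.mp hA]
  | succ n ih =>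
    intro A hA
    obtain ⟨v, hv⟩ : A.Nonempty := by rw [← Finset.card_pos, hA]; omega
    have hcard : (A.erase v).card = n := by rw [Finset.card_erase_of_mem hv, hA]; rfl
    have hsub : A * A ⊆ (A.erase v) * (A.erase v) ∪ A.image (fun x => v * x) := by
      intro z hz
      rw [Finset.mem_mul] at hz
      obtain ⟨a, ha, b, hb, rfl⟩ := hz
      rcases eq_or_ne a v with rfl | hav
      · exact Finset.mem_union_right _ (Finset.mem_image.mpr ⟨b, hb, rfl⟩)
      rcases eq_or_ne b v with hbv | hbv
      · exact Finset.mem_union_right _ (Finset.mem_image.mpr ⟨a, ha, by rw [hbv, mul_comm]⟩)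
      · exact Finset.mem_union_left _ (mul_mem_mul (Finset.mem_erase.mpr ⟨hav, ha⟩)
          (Finset.mem_erase.mpr ⟨hbv, hb⟩))
    have h1 : (A * A).card ≤ n * (n + 1) / 2 + (n + 1) := by
      calc (A * A).card ≤ ((A.erase v) * (A.erase v)).card + (A.image (fun x => v * x)).card :=
            le_trans (Finset.card_le_card hsub) (Finset.card_union_le _ _)
        _ ≤ n * (n + 1) / 2 + (n + 1) :=
            add_le_add (ih _ hcard) (le_trans Finset.card_image_le hA.le)
    have h2 : n * (n + 1) / 2 + (n + 1) = (n + 1) * (n + 2) / 2 := by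
      rw [show (n+1)*(n+2) = n*(n+1) + (n+1)*2 by ring, Nat.add_mul_div_right _ _ (by norm_num)]
    have h3 : (n+1)*(n+2) = (n+1)*(n+1+1) := by ring
    omega

/-- Lower bound: |A*A| ≥ 2n-1 for positive rationals. -/
lemma two_card_sub_one_le_card_mul_self :
    ∀ (n : ℕ) (A : Finset ℚ), (∀ a ∈ A, 0 < a) → A.card = n → 2 * n - 1 ≤ (A * A).card := by
  intro n
  induction n with
  | zero => intro A _ _; omega
  | succ n ih =>
    intro A hpos hA
    have hne : A.Nonempty := by rw [← Finset.card_pos, hA]; omega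
    set v := A.max' hne with hv
    have hvA : v ∈ A := A.max'_mem hne
    have hcard : (A.erase v).card = n := by rw [Finset.card_erase_of_mem hvA, hA]; rfl
    rcases Nat.eq_zero_or_pos n with rfl | hn
    · have : v * v ∈ A * A := mul_mem_mul hvA hvA
      have := Finset.card_pos.mpr ⟨v * v, this⟩
      omega
    have hne' : (A.erase v).Nonempty := by rw [← Finset.card_pos, hcard]; omega
    set y := (A.erase v).max' hne' with hy
    have hyA' : y ∈ A.erase v := Finset.max'_mem _ hne'
    have hyA : y ∈ A := Finset.mem_of_mem_erase hyA'
    have hyv : y < v := lt_of_le_of_ne (A.le_max' y hyA) (Finset.ne_of_mem_erase hyA')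
    have hypos : 0 < y := hpos y hyA
    have hbound : ∀ z ∈ (A.erase v) * (A.erase v), z < v * y := by
      intro z hz
      rw [Finset.mem_mul] at hz
      obtain ⟨a, ha, b, hb, rfl⟩ := hz
      have ha' : a ∈ A := Finset.mem_of_mem_erase ha
      have hb' : b ∈ A := Finset.mem_of_mem_erase hb
      have hay : a ≤ y := Finset.le_max' _ a ha
      have hby : b ≤ y := Finset.le_max' _ b hb
      calc a * b ≤ y * y := by
            apply mul_le_mul hay hby (le_of_lt (hpos b hb')) (le_of_lt hypos)
        _ < v * y := by exact mul_lt_mul_of_pos_right hyv hypos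
    have hvy : v * y ∉ (A.erase v) * (A.erase v) := fun h => lt_irrefl _ (hbound _ h)
    have hvv : v * v ∉ (A.erase v) * (A.erase v) := by
      intro h
      have := hbound _ h
      have h2 : v * y < v * v := by
        exact mul_lt_mul_of_pos_left hyv (lt_trans hypos hyv)
      linarith
    have hvyvv : v * y ≠ v * v := by
      have h2 : v * y < v * v := mul_lt_mul_of_pos_left hyv (lt_trans hypos hyv)
      exact ne_of_lt h2
    have hsub : (A.erase v) * (A.erase v) ∪ {v * y, v * v} ⊆ A * A := by
      apply Finset.union_subset
      · exact Finset.mul_subset_mul (Finset.erase_subset _ _) (Finset.erase_subset _ _)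
      · intro z hz
        simp only [Finset.mem_insert, Finset.mem_singleton] at hz
        rcases hz with rfl | rfl
        · exact mul_mem_mul hvA hyA
        · exact mul_mem_mul hvA hvA
    have hdisj : Disjoint ((A.erase v) * (A.erase v)) {v * y, v * v} := by
      rw [Finset.disjoint_right]
      intro z hz
      simp only [Finset.mem_insert, Finset.mem_singleton] at hz
      rcases hz with rfl | rfl
      · exact hvy
      · exact hvv
    have hcardu : ((A.erase v) * (A.erase v)).card + 2 ≤ (A * A).card := by
      have := Finset.card_le_card hsub
      rw [Finset.card_union_of_disjoint hdisj] at this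
      have h2 : ({v * y, v * v} : Finset ℚ).card = 2 := Finset.card_pair hvyvv
      omega
    have hih := ih (A.erase v) (fun a ha => hpos a (Finset.mem_of_mem_erase ha)) hcard
    omega

lemma exists_sorted_three {α : Type*} [LinearOrder α] [DecidableEq α] {s : Finset α}
    (h : s.card = 3) : ∃ a b c, a < b ∧ b < c ∧ s = {a, b, c} := by
  obtain ⟨x, y, z, hxy, hxz, hyz, rfl⟩ := Finset.card_eq_three.mp h
  have key : ∀ a b c : α, a < b → b < c → ({x, y, z} : Finset α) = {a, b, c} →
      ∃ a b c, a < b ∧ b < c ∧ ({x, y, z} : Finset α) = {a, b, c} :=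
    fun a b c h1 h2 h3 => ⟨a, b, c, h1, h2, h3⟩
  rcases lt_trichotomy x y with h1 | h1 | h1
  · rcases lt_trichotomy y z with h2 | h2 | h2
    · exact key x y z h1 h2 rfl
    · exact absurd h2 hyz
    · rcases lt_trichotomy x z with h3 | h3 | h3
      · exact key x z y h3 h2 (by ext w; simp; tauto)
      · exact absurd h3 hxz
      · exact key z x y h3 h1 (by ext w; simp; tauto)
  · exact absurd h1 hxy
  · rcases lt_trichotomy x z with h2 | h2 | h2
    · exact key y x z h1 h2 (by ext w; simp; tauto)
    · exact absurd h2 hxz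
    · rcases lt_trichotomy y z with h3 | h3 | h3
      · exact key y z x h3 h2 (by ext w; simp; tauto)
      · exact absurd h3 hyz
      · exact key z y x h3 h1 (by ext w; simp; tauto)

lemma gp_div_helper {g q z1 z2 z3 w : ℚ} (hg : g ≠ 0) (hq : q ≠ 0) {t1 t2 t3 : ℤ}
    (h1 : z1 = g * q ^ t1) (h2 : z2 = g * q ^ t2) (h3 : z3 = g * q ^ t3)
    (h : z3 * w = z1 * z2) : w = g * q ^ (t1 + t2 - t3) := by
  have hz3 : z3 ≠ 0 := by rw [h3]; exact mul_ne_zero hg (zpow_ne_zero _ hq)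
  apply mul_left_cancel₀ hz3
  have e : q ^ t1 * q ^ t2 = q ^ t3 * q ^ (t1 + t2 - t3) := by
    rw [← zpow_add₀ hq, ← zpow_add₀ hq]; congr 1; omega
  calc z3 * w = z1 * z2 := h
    _ = g * g * (q ^ t1 * q ^ t2) := by rw [h1, h2]; ring
    _ = g * g * (q ^ t3 * q ^ (t1 + t2 - t3)) := by rw [e]
    _ = z3 * (g * q ^ (t1 + t2 - t3)) := by rw [h3]; ring

/-- Main structural lemma: small product set forces geometric progression structure. -/
lemma main_gp : ∀ (n : ℕ), 3 ≤ n → ∀ A : Finset ℚ, (∀ a ∈ A, 0 < a) → A.card = n →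
    (A * A).card ≤ 3 * n - 4 → ∃ g q : ℚ, 0 < g ∧ 1 < q ∧ ∀ a ∈ A, ∃ t : ℤ, a = g * q ^ t := by
  intro n hn
  induction n, hn using Nat.le_induction with
  | base =>
    intro A hpos hcard hAA
    obtain ⟨a, b, c, hab, hbc, hA⟩ := exists_sorted_three hcard
    have haA : a ∈ A := by rw [hA]; simp
    have hbA : b ∈ A := by rw [hA]; simp
    have hcA : c ∈ A := by rw [hA]; simp
    have ha : 0 < a := hpos a haA
    have hb : 0 < b := hpos b hbA
    have hc : 0 < c := hpos c hcA
    set S : Finset ℚ := {a * a, a * b, a * c, b * c, c * c} with hS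
    have l1 : a * a < a * b := by nlinarith
    have l2 : a * b < a * c := by nlinarith
    have l3 : a * c < b * c := by nlinarith
    have l4 : b * c < c * c := by nlinarith
    have hScard : S.card = 5 := by
      rw [hS]
      rw [Finset.card_insert_of_notMem (by
        simp only [Finset.mem_insert, Finset.mem_singleton]; push_neg
        refine ⟨?_, ?_, ?_, ?_⟩ <;> nlinarith)]
      rw [Finset.card_insert_of_notMem (by
        simp only [Finset.mem_insert, Finset.mem_singleton]; push_neg
        refine ⟨?_, ?_, ?_⟩ <;> nlinarith)]
      rw [Finset.card_insert_of_notMem (by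
        simp only [Finset.mem_insert, Finset.mem_singleton]; push_neg
        refine ⟨?_, ?_⟩ <;> nlinarith)]
      rw [Finset.card_insert_of_notMem (by
        simp only [Finset.mem_singleton]; nlinarith)]
      simp
    have hSsub : S ⊆ A * A := by
      intro w hw
      rw [hS] at hw
      simp only [Finset.mem_insert, Finset.mem_singleton] at hw
      rcases hw with rfl | rfl | rfl | rfl | rfl
      · exact mul_mem_mul haA haA
      · exact mul_mem_mul haA hbA
      · exact mul_mem_mul haA hcA
      · exact mul_mem_mul hbA hcA
      · exact mul_mem_mul hcA hcA
    have hSeq : S = A * A := by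
      apply Finset.eq_of_subset_of_card_le hSsub
      rw [hScard]
      omega
    have hbbA : b * b ∈ S := by rw [hSeq]; exact mul_mem_mul hbA hbA
    rw [hS] at hbbA
    simp only [Finset.mem_insert, Finset.mem_singleton] at hbbA
    have hbb : b * b = a * c := by
      rcases hbbA with h | h | h | h | h
      · nlinarith
      · nlinarith
      · exact h
      · nlinarith
      · nlinarith
    refine ⟨a, b / a, ha, (one_lt_div ha).mpr hab, ?_⟩
    intro w hw
    rw [hA] at hw
    simp only [Finset.mem_insert, Finset.mem_singleton] at hw
    have ha0 : a ≠ 0 := ne_of_gt ha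
    rcases hw with rfl | rfl | rfl
    · exact ⟨0, by simp⟩
    · exact ⟨1, by field_simp⟩
    · refine ⟨2, ?_⟩
      have : a * (b / a) ^ (2:ℤ) = b * b / a := by
        rw [show (2:ℤ) = (2:ℕ) by rfl, zpow_natCast]
        field_simp
      rw [this, hbb]
      field_simp
  | succ n hn ih =>
    intro A hpos hcard hAA
    have hne : A.Nonempty := by rw [← Finset.card_pos, hcard]; omega
    set v := A.max' hne with hv
    have hvA : v ∈ A := A.max'_mem hne
    have hvpos : 0 < v := hpos v hvA
    have hv0 : v ≠ 0 := ne_of_gt hvpos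
    set A' := A.erase v with hA'
    have hA'card : A'.card = n := by rw [hA', Finset.card_erase_of_mem hvA, hcard]; rfl
    have hA'pos : ∀ a ∈ A', 0 < a := fun a ha => hpos a (Finset.mem_of_mem_erase ha)
    have hA'sub : A' ⊆ A := Finset.erase_subset _ _
    have hne' : A'.Nonempty := by rw [← Finset.card_pos, hA'card]; omega
    set y1 := A'.max' hne' with hy1
    have hy1A' : y1 ∈ A' := Finset.max'_mem _ hne'
    have hy1A : y1 ∈ A := hA'sub hy1A'
    have hy1v : y1 < v := lt_of_le_of_ne (A.le_max' y1 hy1A) (Finset.ne_of_mem_erase hy1A')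
    have hy1pos : 0 < y1 := hA'pos y1 hy1A'
    have hmaxA' : ∀ x ∈ A', x ≤ y1 := fun x hx => Finset.le_max' _ x hx
    have hbound : ∀ z ∈ A' * A', z < v * y1 := by
      intro z hz
      obtain ⟨a, ha, b, hb, rfl⟩ := Finset.mem_mul.mp hz
      calc a * b ≤ y1 * y1 :=
            mul_le_mul (hmaxA' a ha) (hmaxA' b hb) (le_of_lt (hA'pos b hb)) (le_of_lt hy1pos)
        _ < v * y1 := mul_lt_mul_of_pos_right hy1v hy1pos
    by_cases hcase : ∀ x ∈ A'.erase y1, v * x ∈ A' * A'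
    · -- Case 2 : every product v*x is captured; A is a geometric progression
      have hA'ne2 : (A'.erase y1).Nonempty := by
        rw [← Finset.card_pos, Finset.card_erase_of_mem hy1A', hA'card]; omega
      set y2 := (A'.erase y1).max' hA'ne2 with hy2
      have hy2mem : y2 ∈ A'.erase y1 := Finset.max'_mem _ _
      have hy2A' : y2 ∈ A' := Finset.mem_of_mem_erase hy2mem
      have hy2y1 : y2 < y1 := lt_of_le_of_ne (hmaxA' _ hy2A') (Finset.ne_of_mem_erase hy2mem)
      have hy2pos : 0 < y2 := hA'pos _ hy2A'
      have hmax2 : ∀ x ∈ A', x ≠ y1 → x ≤ y2 :=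
        fun x hx hnex => Finset.le_max' _ _ (Finset.mem_erase.mpr ⟨hnex, hx⟩)
      have hfactor : ∀ x ∈ A'.erase y1, ∀ z1 ∈ A', ∀ z2 ∈ A', z1 * z2 = v * x →
          x < z1 ∧ x < z2 := by
        intro x hx z1 hz1 z2 hz2 heq
        have hxA' : x ∈ A' := Finset.mem_of_mem_erase hx
        have hxpos : 0 < x := hA'pos x hxA'
        have hz1pos : 0 < z1 := hA'pos z1 hz1
        have hz2pos : 0 < z2 := hA'pos z2 hz2
        constructor
        · by_contra hle
          push_neg at hle
          have h1 : z1 * z2 ≤ x * y1 :=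
            mul_le_mul hle (hmaxA' _ hz2) (le_of_lt hz2pos) (le_of_lt hxpos)
          have h2 : y1 * x < v * x := mul_lt_mul_of_pos_right hy1v hxpos
          nlinarith
        · by_contra hle
          push_neg at hle
          have h1 : z1 * z2 ≤ y1 * x :=
            mul_le_mul (hmaxA' _ hz1) hle (le_of_lt hz2pos) (le_of_lt hy1pos)
          have h2 : y1 * x < v * x := mul_lt_mul_of_pos_right hy1v hxpos
          nlinarith
      have hveq : v * y2 = y1 * y1 := by
        obtain ⟨z1, hz1, z2, hz2, hzz⟩ := Finset.mem_mul.mp (hcase y2 hy2mem)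
        obtain ⟨hgt1, hgt2⟩ := hfactor y2 hy2mem z1 hz1 z2 hz2 hzz
        have hz1y1 : z1 = y1 := by
          by_contra hne2
          exact absurd (hmax2 _ hz1 hne2) (not_le.mpr hgt1)
        have hz2y1 : z2 = y1 := by
          by_contra hne2
          exact absurd (hmax2 _ hz2 hne2) (not_le.mpr hgt2)
        rw [← hzz, hz1y1, hz2y1]
      set q := y1 / y2 with hqdef
      have hq1 : 1 < q := (one_lt_div hy2pos).mpr hy2y1
      have hq0 : q ≠ 0 := by positivity
      have hy10 : y1 ≠ 0 := ne_of_gt hy1pos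
      have hy20 : y2 ≠ 0 := ne_of_gt hy2pos
      have hvL : v = y1 * q ^ (1 : ℤ) := by
        rw [hqdef, zpow_one]
        field_simp
        linear_combination hveq
      have key : ∀ m : ℕ, ∀ x ∈ A', (A'.filter (fun z => x < z)).card ≤ m →
          ∃ t : ℤ, x = y1 * q ^ t := by
        intro m
        induction m with
        | zero =>
          intro x hx hcard0
          rcases eq_or_ne x y1 with rfl | hxne
          · exact ⟨0, by simp⟩
          · exfalso
            have hmem : y1 ∈ A'.filter (fun z => x < z) :=
              Finset.mem_filter.mpr ⟨hy1A', lt_of_le_of_ne (hmaxA' x hx) hxne⟩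
            have := Finset.card_pos.mpr ⟨y1, hmem⟩
            omega
        | succ m ihm =>
          intro x hx hcardm
          rcases eq_or_ne x y1 with rfl | hxne
          · exact ⟨0, by simp⟩
          have hxe : x ∈ A'.erase y1 := Finset.mem_erase.mpr ⟨hxne, hx⟩
          obtain ⟨z1, hz1, z2, hz2, hzz⟩ := Finset.mem_mul.mp (hcase x hxe)
          obtain ⟨hgt1, hgt2⟩ := hfactor x hxe z1 hz1 z2 hz2 hzz
          have hsubcard : ∀ z ∈ A', x < z → (A'.filter (fun w => z < w)).card ≤ m := by
            intro z hzA hxz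
            have hss : A'.filter (fun w => z < w) ⊂ A'.filter (fun w => x < w) := by
              constructor
              · intro w hw
                rw [Finset.mem_filter] at hw ⊢
                exact ⟨hw.1, lt_trans hxz hw.2⟩
              · intro hcon
                have hzin : z ∈ A'.filter (fun w => x < w) := Finset.mem_filter.mpr ⟨hzA, hxz⟩
                have := Finset.mem_filter.mp (hcon hzin)
                exact lt_irrefl z this.2
            have := Finset.card_lt_card hss
            omega
          obtain ⟨t1, ht1⟩ := ihm z1 hz1 (hsubcard z1 hz1 hgt1)
          obtain ⟨t2, ht2⟩ := ihm z2 hz2 (hsubcard z2 hz2 hgt2)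
          exact ⟨t1 + t2 - 1, gp_div_helper hy10 hq0 ht1 ht2 hvL hzz.symm⟩
      refine ⟨y1, q, hy1pos, hq1, ?_⟩
      intro a ha
      rcases eq_or_ne a v with rfl | hav
      · exact ⟨1, hvL⟩
      · exact key A'.card a (Finset.mem_erase.mpr ⟨hav, ha⟩)
          (Finset.card_le_card (Finset.filter_subset _ _))
    · -- Case 1 : some product v*x is new; use induction hypothesis on A'
      push_neg at hcase
      obtain ⟨x, hx, hvxnew⟩ := hcase
      have hxA' : x ∈ A' := Finset.mem_of_mem_erase hx
      have hxy1 : x < y1 := lt_of_le_of_ne (hmaxA' x hxA') (Finset.ne_of_mem_erase hx)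
      have hxpos : 0 < x := hA'pos x hxA'
      have hxA : x ∈ A := hA'sub hxA'
      have hvy1new : v * y1 ∉ A' * A' := fun h => lt_irrefl _ (hbound _ h)
      have hchain : v * x < v * y1 ∧ v * y1 < v * v := by
        constructor
        · exact mul_lt_mul_of_pos_left hxy1 hvpos
        · exact mul_lt_mul_of_pos_left hy1v hvpos
      have hvvnew : v * v ∉ A' * A' := by
        intro h
        have := hbound _ h
        linarith [hchain.2]
      have hsub3 : A' * A' ∪ {v * x, v * y1, v * v} ⊆ A * A := by
        apply Finset.union_subset (Finset.mul_subset_mul hA'sub hA'sub)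
        intro z hz
        simp only [Finset.mem_insert, Finset.mem_singleton] at hz
        rcases hz with rfl | rfl | rfl
        · exact mul_mem_mul hvA hxA
        · exact mul_mem_mul hvA hy1A
        · exact mul_mem_mul hvA hvA
      have hdisj3 : Disjoint (A' * A') {v * x, v * y1, v * v} := by
        rw [Finset.disjoint_right]
        intro z hz
        simp only [Finset.mem_insert, Finset.mem_singleton] at hz
        rcases hz with rfl | rfl | rfl
        · exact hvxnew
        · exact hvy1new
        · exact hvvnew
      have hcard3 : ({v * x, v * y1, v * v} : Finset ℚ).card = 3 := by
        rw [Finset.card_insert_of_notMem (by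
          simp only [Finset.mem_insert, Finset.mem_singleton]
          push_neg
          exact ⟨ne_of_lt hchain.1, ne_of_lt (lt_trans hchain.1 hchain.2)⟩)]
        rw [Finset.card_insert_of_notMem (by
          simp only [Finset.mem_singleton]
          exact ne_of_lt hchain.2)]
        simp
      have hstep : (A' * A').card + 3 ≤ (A * A).card := by
        have h1 := Finset.card_le_card hsub3
        rw [Finset.card_union_of_disjoint hdisj3, hcard3] at h1
        exact h1
      have hA'AA : (A' * A').card ≤ 3 * n - 4 := by omega
      obtain ⟨g, q, hg, hq, hGP⟩ := ih A' hA'pos hA'card hA'AA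
      have hq0 : q ≠ 0 := by positivity
      have hg0 : g ≠ 0 := ne_of_gt hg
      have hqpos : 0 < q := lt_trans one_pos hq
      by_cases hvGP : ∃ t : ℤ, v = g * q ^ t
      · obtain ⟨t, ht⟩ := hvGP
        refine ⟨g, q, hg, hq, ?_⟩
        intro a ha
        rcases eq_or_ne a v with rfl | hav
        · exact ⟨t, ht⟩
        · exact hGP a (Finset.mem_erase.mpr ⟨hav, ha⟩)
      · -- v is not in the GP: count to find structure or contradiction
        have himdisj : Disjoint (A'.image (fun w => v * w)) (A' * A') := by
          rw [Finset.disjoint_left]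
          intro w hw hw2
          obtain ⟨x', hx', rfl⟩ := Finset.mem_image.mp hw
          obtain ⟨z1, hz1, z2, hz2, hzz⟩ := Finset.mem_mul.mp hw2
          obtain ⟨t1, ht1⟩ := hGP z1 hz1
          obtain ⟨t2, ht2⟩ := hGP z2 hz2
          obtain ⟨t3, ht3⟩ := hGP x' hx'
          exact hvGP ⟨t1 + t2 - t3, gp_div_helper hg0 hq0 ht1 ht2 ht3 (by
            rw [mul_comm x' v]; exact hzz.symm)⟩
        have himcard : (A'.image (fun w => v * w)).card = n := by
          rw [Finset.card_image_of_injective _ (mul_right_injective₀ hv0), hA'card]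
        have himsub : A'.image (fun w => v * w) ⊆ A * A := by
          intro w hw
          obtain ⟨x', hx', rfl⟩ := Finset.mem_image.mp hw
          exact mul_mem_mul hvA (hA'sub hx')
        have hvvim : v * v ∉ A'.image (fun w => v * w) := by
          intro h
          obtain ⟨x', hx', hx'e⟩ := Finset.mem_image.mp h
          have : x' = v := mul_left_cancel₀ hv0 hx'e
          rw [this] at hx'
          exact Finset.notMem_erase v A hx'
        by_cases hvvA : v * v ∈ A' * A'
        · -- square-root refinement case
          obtain ⟨z1, hz1, z2, hz2, hzz⟩ := Finset.mem_mul.mp hvvA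
          obtain ⟨t1, ht1⟩ := hGP z1 hz1
          obtain ⟨t2, ht2⟩ := hGP z2 hz2
          rcases Int.even_or_odd (t1 + t2) with ⟨s, hs⟩ | ⟨s, hs⟩
          · exfalso
            apply hvGP
            refine ⟨s, ?_⟩
            have hsq : v * v = (g * q ^ s) * (g * q ^ s) := by
              calc v * v = z1 * z2 := hzz.symm
                _ = g * g * (q ^ t1 * q ^ t2) := by rw [ht1, ht2]; ring
                _ = g * g * (q ^ s * q ^ s) := by
                    rw [← zpow_add₀ hq0, ← zpow_add₀ hq0, show t1 + t2 = s + s from by omega]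
                _ = (g * q ^ s) * (g * q ^ s) := by ring
            rcases mul_self_eq_mul_self_iff.mp hsq with h | h
            · exact h
            · exfalso
              have : 0 < g * q ^ s := by positivity
              linarith
          · -- q is a square
            have hgqs : 0 < g * q ^ s := by positivity
            set r := v / (g * q ^ s) with hrdef
            have hrpos : 0 < r := div_pos hvpos hgqs
            have hvv2 : v * v = (g * q ^ s) * (g * q ^ s) * q := by
              calc v * v = z1 * z2 := hzz.symm
                _ = g * g * (q ^ t1 * q ^ t2) := by rw [ht1, ht2]; ring
                _ = g * g * (q ^ s * q ^ s * q ^ (1:ℤ)) := by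
                    rw [← zpow_add₀ hq0, ← zpow_add₀ hq0, ← zpow_add₀ hq0,
                      show t1 + t2 = s + s + 1 from by omega]
                _ = (g * q ^ s) * (g * q ^ s) * q := by rw [zpow_one]; ring
            have hr2 : r * r = q := by
              rw [hrdef, div_mul_div_comm, hvv2]
              field_simp
            have hr1 : 1 < r := by nlinarith
            refine ⟨g, r, hg, hr1, ?_⟩
            have hr0 : r ≠ 0 := ne_of_gt hrpos
            have hqr : ∀ t : ℤ, q ^ t = r ^ (2 * t) := by
              intro t
              rw [← hr2, mul_zpow, show (2 * t) = t + t by ring, zpow_add₀ hr0]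
            intro a ha
            rcases eq_or_ne a v with rfl | hav
            · refine ⟨2 * s + 1, ?_⟩
              have he : g * r ^ (2 * s + 1) = (g * q ^ s) * r := by
                rw [zpow_add₀ hr0, zpow_one, ← hqr s]; ring
              rw [he, hrdef]
              field_simp
            · obtain ⟨t, ht⟩ := hGP a (Finset.mem_erase.mpr ⟨hav, ha⟩)
              exact ⟨2 * t, by rw [ht, hqr t]⟩
        · exfalso
          have hsub4 : (A' * A') ∪ (A'.image (fun w => v * w) ∪ {v * v}) ⊆ A * A := by
            apply Finset.union_subset (Finset.mul_subset_mul hA'sub hA'sub)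
            apply Finset.union_subset himsub
            intro z hz
            rw [Finset.mem_singleton] at hz
            rw [hz]
            exact mul_mem_mul hvA hvA
          have hdisj4 : Disjoint (A' * A') (A'.image (fun w => v * w) ∪ {v * v}) := by
            rw [Finset.disjoint_union_right]
            refine ⟨himdisj.symm, ?_⟩
            rw [Finset.disjoint_right]
            intro z hz
            rw [Finset.mem_singleton] at hz
            rw [hz]
            exact hvvA
          have hdisj5 : Disjoint (A'.image (fun w => v * w)) {v * v} := by
            rw [Finset.disjoint_right]
            intro z hz
            rw [Finset.mem_singleton] at hz
            rw [hz]
            exact hvvim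
          have hc1 := Finset.card_le_card hsub4
          rw [Finset.card_union_of_disjoint hdisj4, Finset.card_union_of_disjoint hdisj5,
            himcard, Finset.card_singleton] at hc1
          have hlow := two_card_sub_one_le_card_mul_self n A' hA'pos hA'card
          omega

/-- Additive upper bound: |A+A| ≤ n(n+1)/2. -/
lemma card_add_self_le' {α : Type*} [AddCommMonoid α] [DecidableEq α] :
    ∀ (n : ℕ) (A : Finset α), A.card = n → (A + A).card ≤ n * (n + 1) / 2 := by
  intro n
  induction n with
  | zero => intro A hA; simp [Finset.card_eq_zero.mp hA]
  | succ n ih =>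
    intro A hA
    obtain ⟨v, hv⟩ : A.Nonempty := by rw [← Finset.card_pos, hA]; omega
    have hcard : (A.erase v).card = n := by rw [Finset.card_erase_of_mem hv, hA]; rfl
    have hsub : A + A ⊆ (A.erase v) + (A.erase v) ∪ A.image (fun x => v + x) := by
      intro z hz
      rw [Finset.mem_add] at hz
      obtain ⟨a, ha, b, hb, rfl⟩ := hz
      rcases eq_or_ne a v with rfl | hav
      · exact Finset.mem_union_right _ (Finset.mem_image.mpr ⟨b, hb, rfl⟩)
      rcases eq_or_ne b v with hbv | hbv
      · exact Finset.mem_union_right _ (Finset.mem_image.mpr ⟨a, ha, by rw [hbv, add_comm]⟩)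
      · exact Finset.mem_union_left _ (add_mem_add (Finset.mem_erase.mpr ⟨hav, ha⟩)
          (Finset.mem_erase.mpr ⟨hbv, hb⟩))
    have h1 : (A + A).card ≤ n * (n + 1) / 2 + (n + 1) := by
      calc (A + A).card ≤ ((A.erase v) + (A.erase v)).card + (A.image (fun x => v + x)).card :=
            le_trans (Finset.card_le_card hsub) (Finset.card_union_le _ _)
        _ ≤ n * (n + 1) / 2 + (n + 1) :=
            add_le_add (ih _ hcard) (le_trans Finset.card_image_le hA.le)
    have h2 : n * (n + 1) / 2 + (n + 1) = (n + 1) * (n + 2) / 2 := by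
      rw [show (n+1)*(n+2) = n*(n+1) + (n+1)*2 by ring, Nat.add_mul_div_right _ _ (by norm_num)]
    have h3 : (n+1)*(n+2) = (n+1)*(n+1+1) := by ring
    omega

/-- Exponent comparison in a geometric progression. -/
lemma expo_lt {g q : ℚ} (hg : 0 < g) (hq : 1 < q) {m k : ℤ}
    (h : g * q ^ m < g * q ^ k) : m < k := by
  by_contra hle
  push_neg at hle
  have : q ^ k ≤ q ^ m := zpow_le_zpow_right₀ (le_of_lt hq) hle
  have : g * q ^ k ≤ g * q ^ m := by
    apply mul_le_mul_of_nonneg_left this (le_of_lt hg)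
  linarith

lemma expo_le {g q : ℚ} (hg : 0 < g) (hq : 1 < q) {m k : ℤ}
    (h : g * q ^ m ≤ g * q ^ k) : m ≤ k := by
  by_contra hlt
  push_neg at hlt
  have h2 : q ^ k < q ^ m := zpow_lt_zpow_right₀ hq hlt
  have : g * q ^ k < g * q ^ m := by
    apply mul_lt_mul_of_pos_left h2 hg
  linarith

/-- No non-trivial additive collisions in a geometric progression with rational ratio. -/
lemma gp_sidon {g q : ℚ} (hg : 0 < g) (hq : 1 < q) {α β γ δ : ℤ}
    (h : g * q ^ α + g * q ^ β = g * q ^ γ + g * q ^ δ)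
    (h1 : α < γ) (h2 : γ ≤ δ) (h3 : δ < β) : False := by
  have hqpos : 0 < q := lt_trans one_pos hq
  have hq0 : q ≠ 0 := ne_of_gt hqpos
  have hg0 : g ≠ 0 := ne_of_gt hg
  obtain ⟨B, hBv⟩ : ∃ B : ℕ, (B : ℤ) = β - α := ⟨(β - α).toNat, Int.toNat_of_nonneg (by omega)⟩
  obtain ⟨C, hCv⟩ : ∃ C : ℕ, (C : ℤ) = γ - α := ⟨(γ - α).toNat, Int.toNat_of_nonneg (by omega)⟩
  obtain ⟨D, hDv⟩ : ∃ D : ℕ, (D : ℤ) = δ - α := ⟨(δ - α).toNat, Int.toNat_of_nonneg (by omega)⟩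
  have hC1 : 1 ≤ C := by omega
  have hCD : C ≤ D := by omega
  have hDB : D < B := by omega
  -- normalize the collision equation
  have pB : q ^ β = q ^ α * q ^ B := by
    rw [← zpow_natCast q B, ← zpow_add₀ hq0]
    congr 1
    omega
  have pC : q ^ γ = q ^ α * q ^ C := by
    rw [← zpow_natCast q C, ← zpow_add₀ hq0]
    congr 1
    omega
  have pD : q ^ δ = q ^ α * q ^ D := by
    rw [← zpow_natCast q D, ← zpow_add₀ hq0]
    congr 1
    omega
  have hkey : (1 : ℚ) + q ^ B = q ^ C + q ^ D := by
    have hx : g * q ^ α ≠ 0 := mul_ne_zero hg0 (zpow_ne_zero _ hq0)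
    apply mul_left_cancel₀ hx
    rw [pB, pC, pD] at h
    rw [mul_add, mul_add, mul_one]
    linear_combination h
  -- pass to numerator/denominator
  set s : ℕ := q.num.toNat with hsdef
  set t : ℕ := q.den with htdef
  have hnum : 0 < q.num := Rat.num_pos.mpr hqpos
  have hs_eq : (s : ℤ) = q.num := Int.toNat_of_nonneg (le_of_lt hnum)
  have htpos : 0 < t := q.pos
  have hts : (t : ℤ) < (s : ℤ) := by
    rw [hs_eq]
    rw [Rat.lt_iff] at hq
    simpa using hq
  have hqt : q * (t : ℚ) = (s : ℚ) := by
    have h1 := Rat.mul_den_eq_num q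
    rw [htdef]
    rw [h1]
    exact_mod_cast congrArg (fun z : ℤ => (z : ℚ)) hs_eq.symm
  have hmulkey : ∀ k : ℕ, k ≤ B → q ^ k * (t : ℚ) ^ B = (s : ℚ) ^ k * (t : ℚ) ^ (B - k) := by
    intro k hk
    have : (t : ℚ) ^ B = (t : ℚ) ^ k * (t : ℚ) ^ (B - k) := by
      rw [← pow_add]
      congr 1
      omega
    rw [this, ← mul_assoc, ← mul_pow, hqt]
  have hmain : (t : ℚ) ^ B + (s : ℚ) ^ B = (s:ℚ) ^ C * (t:ℚ) ^ (B - C) + (s:ℚ) ^ D * (t:ℚ) ^ (B - D) := by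
    have := congrArg (fun z => z * (t : ℚ) ^ B) hkey
    simp only [add_mul, one_mul] at this
    rw [hmulkey B le_rfl, hmulkey C (le_of_lt (by omega)), hmulkey D (le_of_lt hDB)] at this
    simpa using this
  have hnat : t ^ B + s ^ B = s ^ C * t ^ (B - C) + s ^ D * t ^ (B - D) := by
    have : ((t ^ B + s ^ B : ℕ) : ℚ) = ((s ^ C * t ^ (B - C) + s ^ D * t ^ (B - D) : ℕ) : ℚ) := by
      push_cast
      linarith [hmain]
    exact_mod_cast this
  have hB1 : 1 ≤ B := by omega
  have hdvd : s ∣ t ^ B := by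
    have h1 : s ∣ s ^ C * t ^ (B - C) + s ^ D * t ^ (B - D) :=
      dvd_add (Dvd.dvd.mul_right (dvd_pow_self s (by omega)) _)
        (Dvd.dvd.mul_right (dvd_pow_self s (by omega)) _)
    have h2 : s ∣ s ^ B := dvd_pow_self s (by omega)
    have h3 : s ∣ t ^ B + s ^ B := hnat ▸ h1
    exact (Nat.dvd_add_iff_left h2).mpr h3
  have hcop : s.Coprime t := by
    have := q.reduced
    have : q.num.natAbs = s := by omega
    rw [← this]
    exact q.reduced
  have : s = 1 := Nat.Coprime.eq_one_of_dvd (hcop.pow_right B) hdvd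
  omega

/-- In a GP with ratio > 1, a maximal element's sums are new. -/
lemma gp_no_collision {g q : ℚ} (hg : 0 < g) (hq : 1 < q) {x v z1 z2 : ℚ}
    (hx : ∃ t : ℤ, x = g * q ^ t) (hv : ∃ t : ℤ, v = g * q ^ t)
    (hz1 : ∃ t : ℤ, z1 = g * q ^ t) (hz2 : ∃ t : ℤ, z2 = g * q ^ t)
    (hz1v : z1 < v) (hz2v : z2 < v) (hxv : x ≤ v) (hsum : v + x = z1 + z2) : False := by
  rcases eq_or_lt_of_le hxv with rfl | hxv'
  · linarith
  have hxz1 : x < z1 := by linarith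
  have hxz2 : x < z2 := by linarith
  obtain ⟨ξ, hξ⟩ := hx
  obtain ⟨ν, hν⟩ := hv
  obtain ⟨ζ1, hζ1⟩ := hz1
  obtain ⟨ζ2, hζ2⟩ := hz2
  rcases le_total z1 z2 with hzz | hzz
  · apply gp_sidon hg hq (α := ξ) (β := ν) (γ := ζ1) (δ := ζ2)
    · rw [← hξ, ← hν, ← hζ1, ← hζ2]; linarith
    · exact expo_lt hg hq (hξ ▸ hζ1 ▸ hxz1)
    · exact expo_le hg hq (hζ1 ▸ hζ2 ▸ hzz)
    · exact expo_lt hg hq (hζ2 ▸ hν ▸ hz2v)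
  · apply gp_sidon hg hq (α := ξ) (β := ν) (γ := ζ2) (δ := ζ1)
    · rw [← hξ, ← hν, ← hζ1, ← hζ2]; linarith
    · exact expo_lt hg hq (hξ ▸ hζ2 ▸ hxz2)
    · exact expo_le hg hq (hζ2 ▸ hζ1 ▸ hzz)
    · exact expo_lt hg hq (hζ1 ▸ hν ▸ hz1v)

/-- A GP set has all pairwise sums distinct, so its sumset is maximal. -/
lemma sidon_card_add : ∀ (n : ℕ) (A : Finset ℚ) (g q : ℚ), 0 < g → 1 < q →
    (∀ a ∈ A, ∃ t : ℤ, a = g * q ^ t) → A.card = n → n * (n + 1) / 2 ≤ (A + A).card := by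
  intro n
  induction n with
  | zero => intro A g q _ _ _ _; simp
  | succ n ih =>
    intro A g q hg hq hGP hA
    have hne : A.Nonempty := by rw [← Finset.card_pos, hA]; omega
    set v := A.max' hne with hv
    have hvA : v ∈ A := A.max'_mem hne
    have hcard : (A.erase v).card = n := by rw [Finset.card_erase_of_mem hvA, hA]; rfl
    have hGP' : ∀ a ∈ A.erase v, ∃ t : ℤ, a = g * q ^ t :=
      fun a ha => hGP a (Finset.mem_of_mem_erase ha)
    have hih := ih (A.erase v) g q hg hq hGP' hcard
    have himsub : A.image (fun x => v + x) ⊆ A + A := by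
      intro w hw
      obtain ⟨x, hx, rfl⟩ := Finset.mem_image.mp hw
      exact add_mem_add hvA hx
    have hsub : (A.erase v) + (A.erase v) ∪ A.image (fun x => v + x) ⊆ A + A :=
      Finset.union_subset (Finset.add_subset_add (Finset.erase_subset _ _)
        (Finset.erase_subset _ _)) himsub
    have hdisj : Disjoint ((A.erase v) + (A.erase v)) (A.image (fun x => v + x)) := by
      rw [Finset.disjoint_right]
      intro w hw hw2
      obtain ⟨x, hx, rfl⟩ := Finset.mem_image.mp hw
      obtain ⟨z1, hz1, z2, hz2, hzz⟩ := Finset.mem_add.mp hw2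
      have hz1v : z1 < v := lt_of_le_of_ne
        (A.le_max' z1 (Finset.mem_of_mem_erase hz1)) (Finset.ne_of_mem_erase hz1)
      have hz2v : z2 < v := lt_of_le_of_ne
        (A.le_max' z2 (Finset.mem_of_mem_erase hz2)) (Finset.ne_of_mem_erase hz2)
      exact gp_no_collision hg hq (hGP x hx) (hGP v hvA)
        (hGP z1 (Finset.mem_of_mem_erase hz1)) (hGP z2 (Finset.mem_of_mem_erase hz2))
        hz1v hz2v (A.le_max' x hx) hzz.symm
    have himcard : (A.image (fun x => v + x)).card = n + 1 := by
      rw [Finset.card_image_of_injective _ (add_right_injective v), hA]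
    have hc := Finset.card_le_card hsub
    rw [Finset.card_union_of_disjoint hdisj, himcard] at hc
    have h2 : n * (n + 1) / 2 + (n + 1) = (n + 1) * (n + 2) / 2 := by
      rw [show (n+1)*(n+2) = n*(n+1) + (n+1)*2 by ring, Nat.add_mul_div_right _ _ (by norm_num)]
    have h3 : (n+1)*(n+2) = (n+1)*(n+1+1) := by ring
    omega

/-- The Sidon Exclusion Zone theorem: a small product set forces a maximal sumset. -/
lemma sez (n : ℕ) (hn : 3 ≤ n) (A : Finset ℕ) (hpos : ∀ a ∈ A, 0 < a) (hcard : A.card = n)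
    (hAA : (A * A).card ≤ 3 * n - 4) : (A + A).card = n * (n + 1) / 2 := by
  have hinj : Function.Injective (fun x : ℕ => (x : ℚ)) := fun a b h => by
    simpa using h
  set Aq := A.image (fun x : ℕ => (x : ℚ)) with hAq
  have hiq : Aq.card = n := by rw [hAq, Finset.card_image_of_injective _ hinj, hcard]
  have hmul : Aq * Aq = (A * A).image (fun x : ℕ => (x : ℚ)) := by
    rw [hAq]
    exact (Finset.image_mul (f := Nat.castRingHom ℚ)).symm
  have hadd : Aq + Aq = (A + A).image (fun x : ℕ => (x : ℚ)) := by
    rw [hAq]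
    exact (Finset.image_add (f := Nat.castRingHom ℚ)).symm
  have hmulcard : (Aq * Aq).card = (A * A).card := by
    rw [hmul, Finset.card_image_of_injective _ hinj]
  have haddcard : (Aq + Aq).card = (A + A).card := by
    rw [hadd, Finset.card_image_of_injective _ hinj]
  have hposq : ∀ a ∈ Aq, 0 < a := by
    intro a ha
    obtain ⟨x, hx, rfl⟩ := Finset.mem_image.mp ha
    exact_mod_cast hpos x hx
  obtain ⟨g, q, hg, hq, hGP⟩ := main_gp n hn Aq hposq hiq (by rw [hmulcard]; exact hAA)
  have hlow := sidon_card_add n Aq g q hg hq hGP hiq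
  have hupp := card_add_self_le' n A hcard
  rw [haddcard] at hlow
  omega

lemma card_mul_nat_lower (A : Finset ℕ) (hpos : ∀ a ∈ A, 0 < a) :
    2 * A.card - 1 ≤ (A * A).card := by
  have hinj : Function.Injective (fun x : ℕ => (x : ℚ)) := fun a b h => by simpa using h
  set Aq := A.image (fun x : ℕ => (x : ℚ)) with hAq
  have hiq : Aq.card = A.card := by rw [hAq, Finset.card_image_of_injective _ hinj]
  have hmul : Aq * Aq = (A * A).image (fun x : ℕ => (x : ℚ)) := by
    rw [hAq]
    exact (Finset.image_mul (f := Nat.castRingHom ℚ)).symm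
  have hmulcard : (Aq * Aq).card = (A * A).card := by
    rw [hmul, Finset.card_image_of_injective _ hinj]
  have hposq : ∀ a ∈ Aq, 0 < a := by
    intro a ha
    obtain ⟨x, hx, rfl⟩ := Finset.mem_image.mp ha
    exact_mod_cast hpos x hx
  have := two_card_sub_one_le_card_mul_self Aq.card Aq hposq rfl
  omega

def SPP (n : ℕ) : Set (ℕ × ℕ) :=
  {p | ∃ A : Finset ℕ, (∀ a ∈ A, 0 < a) ∧ A.card = n ∧ p = ((A + A).card, (A * A).card)}

theorem stmt_11 (n : ℕ) (hn : 3 ≤ n) :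
    (SPP n).ncard ≤ (n ^ 2 - 3 * n + 4) ^ 2 / 4 - (n - 2) ^ 2 * (n - 1) / 2 := by
  obtain ⟨m, rfl⟩ : ∃ m, n = m + 3 := ⟨n - 3, by omega⟩
  set M := (m + 3) * (m + 3 + 1) / 2 with hM
  have hM2 : 2 * M = m * m + 7 * m + 12 := by
    have he : 2 ∣ (m + 3) * (m + 3 + 1) := (Nat.even_mul_succ_self (m + 3)).two_dvd
    have h1 := Nat.div_mul_cancel he
    have hexp : (m + 3) * (m + 3 + 1) = m * m + 7 * m + 12 := by ring
    omega
  set l := 2 * (m + 3) - 1 with hl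
  set T := ((Finset.Icc l M) ×ˢ (Finset.Icc l M)) \
      ((Finset.Icc l (M - 1)) ×ˢ (Finset.Icc l (3 * (m + 3) - 4))) with hT
  have hsub : SPP (m + 3) ⊆ ↑T := by
    rintro ⟨s, p⟩ ⟨A, hApos, hAcard, heq⟩
    simp only [Prod.mk.injEq] at heq
    obtain ⟨hs, hp⟩ := heq
    have hne : A.Nonempty := by rw [← Finset.card_pos, hAcard]; omega
    have hlow_s : 2 * (m + 3) - 1 ≤ s := by
      have := cauchy_davenport_add_of_linearOrder_isCancelAdd hne hne
      rw [hAcard] at this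
      omega
    have hupp_s : s ≤ M := by
      have := card_add_self_le' (m + 3) A hAcard
      omega
    have hlow_p : 2 * (m + 3) - 1 ≤ p := by
      have := card_mul_nat_lower A hApos
      rw [hAcard] at this
      omega
    have hupp_p : p ≤ M := by
      have := card_mul_self_le' (m + 3) A hAcard
      omega
    rw [hT]
    simp only [Finset.coe_sdiff, Set.mem_diff, Finset.coe_product, Set.mem_prod,
      Finset.mem_coe, Finset.mem_Icc]
    refine ⟨⟨⟨hlow_s, hupp_s⟩, ⟨hlow_p, hupp_p⟩⟩, ?_⟩
    rintro ⟨⟨-, hsM⟩, ⟨-, hp34⟩⟩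
    have hseq : s = M := by
      rw [hs]
      exact sez (m + 3) (by omega) A hApos hAcard (by omega)
    omega
  have hle := Set.ncard_le_ncard hsub T.finite_toSet
  rw [Set.ncard_coe_finset] at hle
  refine le_trans hle ?_
  have hzsub : ((Finset.Icc l (M - 1)) ×ˢ (Finset.Icc l (3 * (m + 3) - 4))) ⊆
      ((Finset.Icc l M) ×ˢ (Finset.Icc l M)) := by
    apply Finset.product_subset_product
    · exact Finset.Icc_subset_Icc_right (by omega)
    · exact Finset.Icc_subset_Icc_right (by omega)
  rw [hT, Finset.card_sdiff_of_subset hzsub, Finset.card_product, Finset.card_product]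
  simp only [Nat.card_Icc]
  have e0 : (m + 3) ^ 2 = m * m + 6 * m + 9 := by ring
  have eB : (m + 3) ^ 2 - 3 * (m + 3) + 4 = 2 * (M + 1 - l) := by omega
  have hRHS1 : ((m + 3) ^ 2 - 3 * (m + 3) + 4) ^ 2 / 4 = (M + 1 - l) ^ 2 := by
    rw [eB, show (2 * (M + 1 - l)) ^ 2 = 4 * (M + 1 - l) ^ 2 by ring,
      Nat.mul_div_cancel_left _ (by norm_num)]
  have h2K : 2 * (M - 1 + 1 - l) = m * m + 3 * m + 2 := by omega
  have hzone2 : (m + 3 - 2) ^ 2 * (m + 3 - 1) = 2 * ((M - 1 + 1 - l) * (m + 1)) := by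
    rw [show m + 3 - 2 = m + 1 by omega, show m + 3 - 1 = m + 2 by omega]
    calc (m + 1) ^ 2 * (m + 2) = (m * m + 3 * m + 2) * (m + 1) := by ring
      _ = (2 * (M - 1 + 1 - l)) * (m + 1) := by rw [h2K]
      _ = 2 * ((M - 1 + 1 - l) * (m + 1)) := by ring
  have hRHS2 : (m + 3 - 2) ^ 2 * (m + 3 - 1) / 2 = (M - 1 + 1 - l) * (m + 1) := by
    rw [hzone2, Nat.mul_div_cancel_left _ (by norm_num)]
  rw [hRHS1, hRHS2, show 3 * (m + 3) - 4 + 1 - l = m + 1 by omega,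
    show (M + 1 - l) ^ 2 = (M + 1 - l) * (M + 1 - l) by ring]
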